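/- Let G be a finite abelian group and let φ : G → ℂ^m be a family of vectors whose Gram matrix is diagonalized by the characters of G, i.e., for every pair of distinct characters χ, ψ : G → ℂˣ one has Σ_{g,h ∈ G} conj(χ(g))·⟨φ(g), φ(h)⟩·ψ(h) = 0. Then the family is geometrically uniform: there exist a vector ψ₀ ∈ ℂ^m and a group homomorphism U from G into the group of m×m unitary complex matrices such that φ(g) = U(g)·ψ₀ for all g ∈ G. -/

import Mathlib

open Matrix

namespace Stmt4Aux

variable {m : ℕ} {G : Type*} [Fintype G] [CommGroup G]

lemma conj_char (χ : G →* ℂˣ) (g : G) :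
    (starRingEnd ℂ) ((χ g : ℂˣ) : ℂ) = ((χ g⁻¹ : ℂˣ) : ℂ) := by
  have h1 : ((χ g : ℂˣ) : ℂ) ^ Fintype.card G = 1 := by
    rw [← Units.val_pow_eq_pow_val, ← map_pow, pow_card_eq_one, _root_.map_one, Units.val_one]
  have hnorm : ‖((χ g : ℂˣ) : ℂ)‖ = 1 :=
    Complex.norm_eq_one_of_pow_eq_one h1 Fintype.card_ne_zero
  rw [map_inv, Units.val_inv_eq_inv_val, Complex.inv_eq_conj hnorm]

lemma sum_dotProduct' {ι : Type*} (s : Finset ι) (f : ι → Fin m → ℂ) (x : Fin m → ℂ) :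
    (∑ i ∈ s, f i) ⬝ᵥ x = ∑ i ∈ s, f i ⬝ᵥ x := by
  simp only [dotProduct, Finset.sum_apply, Finset.sum_mul]
  exact Finset.sum_comm

lemma dotProduct_sum' {ι : Type*} (s : Finset ι) (x : Fin m → ℂ) (f : ι → Fin m → ℂ) :
    x ⬝ᵥ (∑ i ∈ s, f i) = ∑ i ∈ s, x ⬝ᵥ f i := by
  simp only [dotProduct, Finset.sum_apply, Finset.mul_sum]
  exact Finset.sum_comm

/-- Fourier vector attached to a character. -/
noncomputable def vv (φ : G → Fin m → ℂ) (χ : G →* ℂˣ) : Fin m → ℂ :=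
  ∑ g : G, ((χ g : ℂˣ) : ℂ) • φ g

lemma star_vv_dot (φ : G → Fin m → ℂ) (χ ψ : G →* ℂˣ) :
    star (vv φ χ) ⬝ᵥ vv φ ψ =
      ∑ g : G, ∑ h : G,
        (starRingEnd ℂ) ((χ g : ℂˣ) : ℂ) * (star (φ g) ⬝ᵥ (φ h)) * ((ψ h : ℂˣ) : ℂ) := by
  unfold vv
  rw [star_sum, sum_dotProduct']
  refine Finset.sum_congr rfl fun g _ => ?_
  rw [dotProduct_sum']
  refine Finset.sum_congr rfl fun h _ => ?_
  rw [star_smul, smul_dotProduct, dotProduct_smul]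
  simp only [smul_eq_mul, Complex.star_def]
  ring

/-- Rank-one (ortho-)projection attached to a character. -/
noncomputable def PP (φ : G → Fin m → ℂ) (χ : G →* ℂˣ) : Matrix (Fin m) (Fin m) ℂ :=
  (star (vv φ χ) ⬝ᵥ vv φ χ)⁻¹ • vecMulVec (vv φ χ) (star (vv φ χ))

lemma conj_dot_self (v : Fin m → ℂ) :
    (starRingEnd ℂ) (star v ⬝ᵥ v) = star v ⬝ᵥ v := by
  simp [dotProduct, map_sum, Complex.star_def, mul_comm]

lemma vecMulVec_mulVec' (u w x : Fin m → ℂ) :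
    vecMulVec u w *ᵥ x = (w ⬝ᵥ x) • u := by
  funext i
  simp only [mulVec, vecMulVec_apply, dotProduct, Pi.smul_apply, smul_eq_mul,
    Finset.sum_mul]
  exact Finset.sum_congr rfl fun k _ => by ring

lemma vecMulVec_mul' (u w u' w' : Fin m → ℂ) :
    vecMulVec u w * vecMulVec u' w' = (w ⬝ᵥ u') • vecMulVec u w' := by
  ext i j
  simp only [mul_apply, vecMulVec_apply, Matrix.smul_apply, smul_eq_mul, dotProduct,
    Finset.sum_mul]
  exact Finset.sum_congr rfl fun k _ => by ring

lemma sum_mulVec' {ι : Type*} (s : Finset ι) (A : ι → Matrix (Fin m) (Fin m) ℂ)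
    (x : Fin m → ℂ) : (∑ i ∈ s, A i) *ᵥ x = ∑ i ∈ s, A i *ᵥ x := by
  funext j
  simp only [mulVec, dotProduct, Finset.sum_apply, Matrix.sum_apply, Finset.sum_mul]
  rw [Finset.sum_comm]

lemma mulVec_sum' {ι : Type*} (s : Finset ι) (A : Matrix (Fin m) (Fin m) ℂ)
    (f : ι → Fin m → ℂ) : A *ᵥ (∑ i ∈ s, f i) = ∑ i ∈ s, A *ᵥ f i := by
  funext j
  simp only [mulVec, dotProduct, Finset.sum_apply, Finset.mul_sum]
  rw [Finset.sum_comm]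

lemma PP_conjTranspose (φ : G → Fin m → ℂ) (χ : G →* ℂˣ) : (PP φ χ)ᴴ = PP φ χ := by
  unfold PP
  rw [conjTranspose_smul]
  congr 1
  · rw [star_inv₀]
    exact congrArg _ (conj_dot_self _)
  · ext i j
    simp only [conjTranspose_apply, vecMulVec_apply, Pi.star_apply, star_mul', star_star]
    ring

section Dec
variable [DecidableEq (G →* ℂˣ)]

lemma PP_mul (φ : G → Fin m → ℂ)
    (horth : ∀ χ ψ : G →* ℂˣ, χ ≠ ψ → star (vv φ χ) ⬝ᵥ vv φ ψ = 0)
    (χ ψ : G →* ℂˣ) :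
    PP φ χ * PP φ ψ = if χ = ψ then PP φ χ else 0 := by
  unfold PP
  rw [Matrix.smul_mul, Matrix.mul_smul, vecMulVec_mul']
  split_ifs with h
  · subst h
    by_cases h0 : star (vv φ χ) ⬝ᵥ vv φ χ = 0
    · simp [h0]
    · rw [smul_smul, smul_smul]
      congr 1
      field_simp
  · rw [horth χ ψ h]
    simp

lemma PP_mulVec (φ : G → Fin m → ℂ)
    (horth : ∀ χ ψ : G →* ℂˣ, χ ≠ ψ → star (vv φ χ) ⬝ᵥ vv φ ψ = 0)
    (χ ψ : G →* ℂˣ) :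
    PP φ χ *ᵥ vv φ ψ = if χ = ψ then vv φ χ else 0 := by
  unfold PP
  rw [smul_mulVec, vecMulVec_mulVec']
  split_ifs with h
  · subst h
    by_cases h0 : star (vv φ χ) ⬝ᵥ vv φ χ = 0
    · have hv : vv φ χ = 0 := by
        open scoped ComplexOrder in
        exact dotProduct_star_self_eq_zero.mp h0
      simp [hv]
    · rw [smul_smul, inv_mul_cancel₀ h0, one_smul]
  · rw [horth χ ψ h]
    simp

end Dec

section Fin
variable [Fintype (G →* ℂˣ)]

lemma sum_char_eq_zero {a : G} (ha : a ≠ 1) :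
    ∑ χ : G →* ℂˣ, ((χ a : ℂˣ) : ℂ) = 0 := by
  have : NeZero ((Monoid.exponent G : ℂ)) :=
    ⟨by exact_mod_cast Monoid.exponent_ne_zero_of_finite⟩
  obtain ⟨χ₀, hχ₀⟩ := CommGroup.exists_apply_ne_one_of_hasEnoughRootsOfUnity G ℂ ha
  refine eq_zero_of_mul_eq_self_left (b := ((χ₀ a : ℂˣ) : ℂ)) ?_ ?_
  · exact fun hh => hχ₀ (Units.ext hh)
  · rw [Finset.mul_sum]
    exact Fintype.sum_bijective (χ₀ * ·) (Group.mulLeft_bijective χ₀) _ _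
      fun χ ↦ by simp [MonoidHom.mul_apply]

/-- The unitary implementing the group action. -/
noncomputable def UU (φ : G → Fin m → ℂ) (g : G) : Matrix (Fin m) (Fin m) ℂ :=
  1 + ∑ χ : G →* ℂˣ, (((χ g⁻¹ : ℂˣ) : ℂ) - 1) • PP φ χ

lemma UU_one (φ : G → Fin m → ℂ) : UU φ 1 = 1 := by
  simp [UU]

lemma UU_mul (φ : G → Fin m → ℂ)
    (horth : ∀ χ ψ : G →* ℂˣ, χ ≠ ψ → star (vv φ χ) ⬝ᵥ vv φ ψ = 0)
    (g h : G) : UU φ g * UU φ h = UU φ (g * h) := by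
  classical
  unfold UU
  have expand : ∀ A B : Matrix (Fin m) (Fin m) ℂ,
      (1 + A) * (1 + B) = 1 + (B + (A + A * B)) := by
    intro A B; noncomm_ring
  rw [expand]
  congr 1
  rw [Finset.sum_mul]
  have hAB : ∀ χ : G →* ℂˣ,
      ((((χ g⁻¹ : ℂˣ) : ℂ) - 1) • PP φ χ) *
          (∑ ψ : G →* ℂˣ, (((ψ h⁻¹ : ℂˣ) : ℂ) - 1) • PP φ ψ)
        = ((((χ g⁻¹ : ℂˣ) : ℂ) - 1) * (((χ h⁻¹ : ℂˣ) : ℂ) - 1)) • PP φ χ := by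
    intro χ
    rw [Finset.mul_sum, Finset.sum_eq_single χ]
    · rw [Matrix.smul_mul, Matrix.mul_smul, PP_mul φ horth, if_pos rfl, smul_smul]
    · intro ψ _ hψ
      rw [Matrix.smul_mul, Matrix.mul_smul, PP_mul φ horth, if_neg (Ne.symm hψ)]
      simp
    · intro hmem; exact absurd (Finset.mem_univ χ) hmem
  rw [Finset.sum_congr rfl fun χ _ => hAB χ, ← Finset.sum_add_distrib,
    ← Finset.sum_add_distrib]
  refine Finset.sum_congr rfl fun χ _ => ?_
  rw [← add_smul, ← add_smul]
  congr 1
  have hc : ((χ (g * h)⁻¹ : ℂˣ) : ℂ) = ((χ g⁻¹ : ℂˣ) : ℂ) * ((χ h⁻¹ : ℂˣ) : ℂ) := by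
    rw [mul_inv, _root_.map_mul, Units.val_mul]
  rw [hc]; ring

lemma UU_conjTranspose (φ : G → Fin m → ℂ) (g : G) : (UU φ g)ᴴ = UU φ g⁻¹ := by
  unfold UU
  rw [conjTranspose_add, conjTranspose_one, conjTranspose_sum]
  congr 1
  refine Finset.sum_congr rfl fun χ _ => ?_
  rw [conjTranspose_smul, PP_conjTranspose]
  congr 1
  rw [star_sub, star_one]
  congr 1
  exact conj_char χ g⁻¹

lemma inversion (φ : G → Fin m → ℂ) (g : G) :
    ∑ χ : G →* ℂˣ, ((χ g⁻¹ : ℂˣ) : ℂ) • vv φ χ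
      = (Fintype.card (G →* ℂˣ) : ℂ) • φ g := by
  classical
  unfold vv
  have step : ∀ χ : G →* ℂˣ,
      ((χ g⁻¹ : ℂˣ) : ℂ) • ∑ h : G, ((χ h : ℂˣ) : ℂ) • φ h
        = ∑ h : G, ((χ (g⁻¹ * h) : ℂˣ) : ℂ) • φ h := by
    intro χ
    rw [Finset.smul_sum]
    exact Finset.sum_congr rfl fun h _ => by
      rw [smul_smul, ← Units.val_mul, ← _root_.map_mul]
  rw [Finset.sum_congr rfl fun χ _ => step χ, Finset.sum_comm]
  have h2 : ∀ h : G, ∑ χ : G →* ℂˣ, ((χ (g⁻¹ * h) : ℂˣ) : ℂ)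
      = if h = g then (Fintype.card (G →* ℂˣ) : ℂ) else 0 := by
    intro h
    by_cases hh : h = g
    · subst hh
      simp [Finset.card_univ]
    · rw [if_neg hh]
      refine sum_char_eq_zero fun e => hh ?_
      rwa [inv_mul_eq_one, eq_comm] at e
  calc ∑ h : G, ∑ χ : G →* ℂˣ, ((χ (g⁻¹ * h) : ℂˣ) : ℂ) • φ h
      = ∑ h : G, (∑ χ : G →* ℂˣ, ((χ (g⁻¹ * h) : ℂˣ) : ℂ)) • φ h := by
        exact Finset.sum_congr rfl fun h _ => (Finset.sum_smul).symm
    _ = (Fintype.card (G →* ℂˣ) : ℂ) • φ g := by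
        rw [Finset.sum_congr rfl fun h _ => by rw [h2 h]]
        rw [Finset.sum_eq_single g]
        · rw [if_pos rfl]
        · intro h _ hh; rw [if_neg hh, zero_smul]
        · intro hmem; exact absurd (Finset.mem_univ g) hmem

end Fin

end Stmt4Aux

open Stmt4Aux

/-- If the Gram matrix of a family `φ : G → ℂ^m` indexed by a finite abelian
group `G` is diagonalized by the characters of `G` (distinct characters are orthogonal with
respect to the Gram form), then the family is geometrically uniform: `φ(g) = U(g)ψ₀` for a
group homomorphism `U` from `G` into the unitary group and a single generating vector `ψ₀`. -/
theorem stmt_4 {m : ℕ} (hm : 0 < m)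
    (G : Type*) [Fintype G] [CommGroup G]
    (φ : G → Fin m → ℂ)
    (hdiag : ∀ χ ψ : G →* ℂˣ, χ ≠ ψ →
      ∑ g : G, ∑ h : G,
        (starRingEnd ℂ) (χ g : ℂ) * (star (φ g) ⬝ᵥ (φ h)) * (ψ h : ℂ) = 0) :
    ∃ (ψ₀ : Fin m → ℂ) (U : G →* Matrix.unitaryGroup (Fin m) ℂ),
      ∀ g : G, φ g = (U g : Matrix (Fin m) (Fin m) ℂ) *ᵥ ψ₀ := by
  classical
  have hNe : NeZero ((Monoid.exponent G : ℂ)) :=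
    ⟨by exact_mod_cast Monoid.exponent_ne_zero_of_finite⟩
  have hfin : Finite (G →* ℂˣ) :=
    Finite.of_equiv G
      ((CommGroup.monoidHom_mulEquiv_of_hasEnoughRootsOfUnity G ℂ).some.symm.toEquiv)
  haveI := Fintype.ofFinite (G →* ℂˣ)
  have horth : ∀ χ ψ : G →* ℂˣ, χ ≠ ψ → star (vv φ χ) ⬝ᵥ vv φ ψ = 0 := by
    intro χ ψ h
    rw [star_vv_dot]
    exact hdiag χ ψ h
  set N : ℂ := (Fintype.card (G →* ℂˣ) : ℂ) with hNdef
  have hN0 : N ≠ 0 := by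
    have : (0 : ℕ) < Fintype.card (G →* ℂˣ) := Fintype.card_pos
    rw [hNdef]
    exact_mod_cast this.ne'
  have hφ : ∀ g : G, φ g = N⁻¹ • ∑ χ : G →* ℂˣ, ((χ g⁻¹ : ℂˣ) : ℂ) • vv φ χ := by
    intro g
    rw [inversion, ← hNdef, smul_smul, inv_mul_cancel₀ hN0, one_smul]
  -- the orbit map
  have key : ∀ g : G, UU φ g *ᵥ φ 1 = φ g := by
    intro g
    have hφ1 : φ 1 = N⁻¹ • ∑ ψ : G →* ℂˣ, vv φ ψ := by
      rw [hφ 1]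
      congr 1
      exact Finset.sum_congr rfl fun ψ _ => by simp
    have hPv : ∀ χ : G →* ℂˣ, PP φ χ *ᵥ φ 1 = N⁻¹ • vv φ χ := by
      intro χ
      rw [hφ1, mulVec_smul, mulVec_sum']
      congr 1
      rw [Finset.sum_congr rfl fun ψ _ => PP_mulVec φ horth χ ψ]
      rw [Finset.sum_eq_single χ]
      · rw [if_pos rfl]
      · intro ψ _ hψ; rw [if_neg (Ne.symm hψ)]
      · intro hmem; exact absurd (Finset.mem_univ χ) hmem
    unfold UU
    rw [add_mulVec, one_mulVec, sum_mulVec']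
    rw [Finset.sum_congr rfl fun χ _ => by rw [smul_mulVec, hPv χ]]
    rw [hφ g, hφ1, Finset.smul_sum, Finset.smul_sum, ← Finset.sum_add_distrib]
    refine Finset.sum_congr rfl fun χ _ => ?_
    rw [smul_smul, smul_smul, ← add_smul]
    congr 1
    ring
  have hmem : ∀ g : G, UU φ g ∈ Matrix.unitaryGroup (Fin m) ℂ := by
    intro g
    rw [Matrix.mem_unitaryGroup_iff, Matrix.star_eq_conjTranspose, UU_conjTranspose,
      UU_mul φ horth, mul_inv_cancel, UU_one]
  refine ⟨φ 1, MonoidHom.mk' (fun g => ⟨UU φ g, hmem g⟩) (fun g h => ?_), fun g => ?_⟩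
  · exact Subtype.ext (UU_mul φ horth g h).symm
  · exact (key g).symm
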